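/- Let P(x,y) be a complex Laurent polynomial in two variables and let M = max_{|x|=|y|=1} |P(x,y)|. For every complex number t with |t| > M, the logarithmic Mahler measure of t - P equals log|t| minus the real part of the absolutely convergent series Σ_{n≥1} c_n/(n t^n), where c_n is the constant term of the Laurent polynomial P^n. That is, (1/(2π)^2) ∫_0^{2π} ∫_0^{2π} log|t - P(e^{iθ}, e^{iφ})| dθ dφ = log|t| - Re Σ_{n≥1} c_n t^{-n}/n. -/

import Mathlib

/-- Evaluation of a Laurent polynomial in two variables (an element of the group algebra
`ℂ[ℤ × ℤ]`) at a point `(x, y)` with `x, y ≠ 0`. -/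
noncomputable def lpEval (P : AddMonoidAlgebra ℂ (ℤ × ℤ)) (x y : ℂ) : ℂ :=
  ∑ m ∈ P.coeff.support, P.coeff m * x ^ m.1 * y ^ m.2

section MahlerAux
open Complex intervalIntegral Real

lemma lpEval_pow (P : AddMonoidAlgebra ℂ (ℤ × ℤ)) {x y : ℂ} (hx : x ≠ 0) (hy : y ≠ 0)
    (n : ℕ) : lpEval (P ^ n) x y = (lpEval P x y) ^ n := by
  let ψ : Multiplicative (ℤ × ℤ) →* ℂ :=
  { toFun := fun m => x ^ (Multiplicative.toAdd m).1 * y ^ (Multiplicative.toAdd m).2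
    map_one' := by simp
    map_mul' := fun a b => by
      show x ^ ((Multiplicative.toAdd a).1 + (Multiplicative.toAdd b).1) *
          y ^ ((Multiplicative.toAdd a).2 + (Multiplicative.toAdd b).2) = _
      rw [zpow_add₀ hx, zpow_add₀ hy]; ring }
  have key : ∀ Q : AddMonoidAlgebra ℂ (ℤ × ℤ),
      lpEval Q x y = AddMonoidAlgebra.lift ℂ ℂ (ℤ × ℤ) ψ Q := by
    intro Q
    rw [AddMonoidAlgebra.lift_apply]
    simp only [Finsupp.sum, smul_eq_mul, lpEval]
    exact Finset.sum_congr rfl fun m _ => by simp [ψ, mul_assoc]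
  rw [key, key, map_pow]

lemma cont_zexp (k : ℤ) : Continuous fun φ : ℝ => Complex.exp (φ * Complex.I) ^ k :=
  (Complex.continuous_exp.comp (Complex.continuous_ofReal.mul continuous_const)).zpow₀ k
    (fun _ => Or.inl (Complex.exp_ne_zero _))

lemma integral_zexp (k : ℤ) :
    ∫ φ in (0:ℝ)..(2 * π), Complex.exp (φ * Complex.I) ^ k
      = if k = 0 then ((2 * π : ℝ) : ℂ) else 0 := by
  rcases eq_or_ne k 0 with hk | hk
  · simp [hk]
  · rw [if_neg hk]
    have h1 : ∀ φ : ℝ, Complex.exp (φ * Complex.I) ^ k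
        = Complex.exp ((k * Complex.I) * φ) := by
      intro φ
      rw [← Complex.exp_int_mul]
      ring_nf
    simp_rw [h1]
    rw [integral_exp_mul_complex (by simp [hk, Complex.I_ne_zero])]
    have : Complex.exp ((k * Complex.I) * ((2 * π : ℝ) : ℂ)) = 1 := by
      rw [show ((k : ℂ) * Complex.I) * ((2 * π : ℝ) : ℂ) = k * (2 * π * Complex.I) by
        push_cast; ring]
      exact Complex.exp_int_mul_two_pi_mul_I k
    rw [show ((2 * π : ℝ) : ℂ) = 2 * (π:ℝ) by push_cast; ring] at this
    simp [this]

lemma integral_lpEval (Q : AddMonoidAlgebra ℂ (ℤ × ℤ)) :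
    (∫ θ in (0:ℝ)..(2 * π), ∫ φ in (0:ℝ)..(2 * π),
      lpEval Q (Complex.exp (θ * Complex.I)) (Complex.exp (φ * Complex.I)))
      = ((2 * π : ℝ) : ℂ) ^ 2 * Q.coeff 0 := by
  have inner : ∀ θ : ℝ, (∫ φ in (0:ℝ)..(2 * π),
      lpEval Q (Complex.exp (θ * Complex.I)) (Complex.exp (φ * Complex.I)))
      = ∑ m ∈ Q.coeff.support, Q.coeff m * Complex.exp (θ * Complex.I) ^ m.1 *
          (if m.2 = 0 then ((2 * π : ℝ) : ℂ) else 0) := by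
    intro θ
    unfold lpEval
    rw [integral_finset_sum (f := fun (m : ℤ × ℤ) (φ : ℝ) => Q.coeff m *
        Complex.exp (θ * Complex.I) ^ m.1 * Complex.exp (φ * Complex.I) ^ m.2) (fun m _ =>
      ((continuous_const.mul (cont_zexp m.2)).intervalIntegrable _ _))]
    exact Finset.sum_congr rfl fun m _ => by
      rw [integral_const_mul, integral_zexp]
  simp_rw [inner]
  rw [integral_finset_sum (f := fun (m : ℤ × ℤ) (θ : ℝ) => Q.coeff m *
      Complex.exp (θ * Complex.I) ^ m.1 * (if m.2 = 0 then ((2 * π : ℝ) : ℂ) else 0))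
    (fun m _ =>
    ((continuous_const.mul (cont_zexp m.1)).mul continuous_const).intervalIntegrable _ _)]
  have term : ∀ m ∈ Q.coeff.support, m ≠ (0 : ℤ × ℤ) →
      (∫ θ in (0:ℝ)..(2 * π), Q.coeff m * Complex.exp (θ * Complex.I) ^ m.1 *
        (if m.2 = 0 then ((2 * π : ℝ) : ℂ) else 0)) = 0 := by
    intro m _ hm
    rcases eq_or_ne m.2 0 with h2 | h2
    · have h1 : m.1 ≠ 0 := fun h1 => hm (Prod.ext h1 h2)
      have key : (∫ θ in (0:ℝ)..(2*π), Q.coeff m * Complex.exp (θ * Complex.I) ^ m.1 * ((2*π:ℝ):ℂ))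
          = (Q.coeff m * ((2*π:ℝ):ℂ)) * ∫ θ in (0:ℝ)..(2*π), Complex.exp (θ * Complex.I) ^ m.1 := by
        rw [← integral_const_mul]
        congr 1; ext θ; ring
      simp only [h2, if_pos]
      rw [key, integral_zexp, if_neg h1, mul_zero]
    · simp [if_neg h2]
  rw [Finset.sum_eq_single (0 : ℤ × ℤ) term (fun h => by simp [Finsupp.notMem_support_iff.1 h])]
  simp [sq]; ring

lemma log_series {t w : ℂ} (hw : ‖w‖ < ‖t‖) :
    HasSum (fun n : ℕ => (-(w ^ (n + 1) / (t ^ (n + 1) * ((n : ℂ) + 1)))).re)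
      (Real.log ‖t - w‖ - Real.log ‖t‖) := by
  have ht0 : t ≠ 0 := fun h => by simp [h] at hw; exact absurd hw (norm_nonneg w).not_gt
  set z : ℂ := w / t with hz
  have hz1 : ‖z‖ < 1 := by
    rw [hz, norm_div, div_lt_one (norm_pos_iff.2 ht0)]; exact hw
  have hzne : (1 : ℂ) - z ≠ 0 := by
    intro h
    have : z = 1 := by linear_combination -h
    rw [this] at hz1; simp at hz1
  have H := Complex.hasSum_taylorSeries_neg_log hz1
  have H1 : HasSum (fun n : ℕ => z ^ (n + 1) / ((n : ℂ) + 1)) (-Complex.log (1 - z)) := by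
    have := (hasSum_nat_add_iff' (f := fun n : ℕ => z ^ n / n) 1).2 H
    simpa using this
  have H2 : HasSum (fun n : ℕ => (-(z ^ (n + 1) / ((n : ℂ) + 1))).re)
      ((Complex.log (1 - z)).re) := by
    simpa using Complex.reCLM.hasSum H1.neg
  have hterm : ∀ n : ℕ, (-(z ^ (n + 1) / ((n : ℂ) + 1))).re
      = (-(w ^ (n + 1) / (t ^ (n + 1) * ((n : ℂ) + 1)))).re := by
    intro n
    congr 2
    rw [hz, div_pow, div_div]
  have hval : (Complex.log (1 - z)).re = Real.log ‖t - w‖ - Real.log ‖t‖ := by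
    rw [Complex.log_re]
    have htw : t - w = t * (1 - z) := by
      rw [hz]; field_simp
    rw [htw, norm_mul, Real.log_mul (by simpa using ht0)
      (norm_ne_zero_iff.2 hzne)]
    ring
  rw [← hval]
  exact H2.congr_fun fun n => (hterm n).symm


lemma mahler_aux (g : ℝ → ℝ → ℂ) (t : ℂ) (c : ℕ → ℂ) (M : ℝ)
    (hgM : ∀ θ φ : ℝ, ‖g θ φ‖ ≤ M) (hM0 : (0:ℝ) ≤ M) (ht : M < ‖t‖)
    (hgcont : Continuous fun p : ℝ × ℝ => g p.1 p.2)
    (hgint : ∀ n : ℕ, (∫ θ in (0:ℝ)..(2*π), ∫ φ in (0:ℝ)..(2*π), (g θ φ) ^ (n+1))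
      = ((2*π:ℝ):ℂ) ^ 2 * c n) :
    Summable (fun n : ℕ => ‖c n * t ^ (-((n : ℤ) + 1)) / ((n : ℂ) + 1)‖) ∧
    (1 / (2 * π) ^ 2) *
        ∫ θ in (0:ℝ)..(2 * π), ∫ φ in (0:ℝ)..(2 * π), Real.log ‖t - g θ φ‖
      = Real.log ‖t‖ - (∑' n : ℕ, c n * t ^ (-((n : ℤ) + 1)) / ((n : ℂ) + 1)).re := by
  have htpos : 0 < ‖t‖ := lt_of_le_of_lt hM0 ht
  have ht0 : t ≠ 0 := norm_pos_iff.1 htpos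
  set r := M / ‖t‖ with hrdef
  have hr0 : 0 ≤ r := div_nonneg hM0 htpos.le
  have hr1 : r < 1 := (div_lt_one htpos).2 ht
  set a : ℕ → ℂ := fun n => c n * t ^ (-((n : ℤ) + 1)) / ((n : ℂ) + 1) with hadef
  have h2pi : (0:ℝ) < 2 * π := by positivity
  have hcbound : ∀ n : ℕ, ‖c n‖ ≤ M ^ (n+1) := by
    intro n
    have h1 : ∀ θ : ℝ, ‖∫ φ in (0:ℝ)..(2*π), (g θ φ) ^ (n+1)‖ ≤ M^(n+1) * |2*π - 0| :=
      fun θ => norm_integral_le_of_norm_le_const (fun φ _ => by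
        rw [norm_pow]; exact pow_le_pow_left₀ (norm_nonneg _) (hgM θ φ) _)
    have h2 : ‖∫ θ in (0:ℝ)..(2*π), ∫ φ in (0:ℝ)..(2*π), (g θ φ) ^ (n+1)‖
        ≤ (M^(n+1) * (2*π)) * |2*π - 0| := by
      apply norm_integral_le_of_norm_le_const
      intro θ _
      have := h1 θ
      rwa [sub_zero, abs_of_pos h2pi] at this
    rw [hgint n, sub_zero, abs_of_pos h2pi] at h2
    have h3 : ‖((2*π:ℝ):ℂ) ^ 2 * c n‖ = (2*π)^2 * ‖c n‖ := by
      rw [norm_mul, norm_pow, Complex.norm_real, Real.norm_of_nonneg h2pi.le]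
    rw [h3, show M^(n+1) * (2*π) * (2*π) = (2*π)^2 * M^(n+1) by ring] at h2
    exact le_of_mul_le_mul_left h2 (by positivity)
  have hanorm : ∀ n : ℕ, ‖a n‖ ≤ r ^ (n+1) := by
    intro n
    have hzp : ‖t ^ (-((n:ℤ)+1))‖ = (‖t‖ ^ (n+1))⁻¹ := by
      rw [norm_zpow, show (-((n:ℤ)+1)) = -(((n+1:ℕ)):ℤ) by push_cast; ring,
        zpow_neg, zpow_natCast]
    have hden : (1:ℝ) ≤ ‖((n:ℂ)+1)‖ := by
      rw [show ((n:ℂ)+1) = ((n+1:ℕ):ℂ) by push_cast; ring, Complex.norm_natCast]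
      exact_mod_cast Nat.one_le_iff_ne_zero.2 (Nat.succ_ne_zero n)
    have key : ‖a n‖ ≤ M^(n+1) * (‖t‖^(n+1))⁻¹ / 1 := by
      rw [hadef]
      simp only [norm_div, norm_mul, hzp]
      gcongr
      exact hcbound n
    rw [div_one, ← div_eq_mul_inv, ← div_pow] at key
    exact key
  have hsum_r : Summable (fun n : ℕ => r ^ (n+1)) := by
    simpa only [pow_succ] using (summable_geometric_of_lt_one hr0 hr1).mul_right r
  have hsummable : Summable (fun n => ‖a n‖) :=
    Summable.of_nonneg_of_le (fun n => norm_nonneg _) hanorm hsum_r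
  refine ⟨hsummable, ?_⟩
  have hA : Summable a := hsummable.of_norm
  have hScsum : HasSum a (∑' n, a n) := hA.hasSum
  have hre : HasSum (fun n => (a n).re) (∑' n, a n).re := by
    simpa using Complex.reCLM.hasSum hScsum
  set F : ℕ → ℝ → ℝ → ℝ :=
    fun n θ φ => (-((g θ φ) ^ (n + 1) / (t ^ (n + 1) * ((n : ℂ) + 1)))).re with hFdef
  have hptwise : ∀ θ φ : ℝ, HasSum (fun n => F n θ φ)
      (Real.log ‖t - g θ φ‖ - Real.log ‖t‖) :=
    fun θ φ => log_series (lt_of_le_of_lt (hgM θ φ) ht)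
  have hFb : ∀ (n : ℕ) (θ φ : ℝ), ‖F n θ φ‖ ≤ r ^ (n+1) := by
    intro n θ φ
    rw [Real.norm_eq_abs]
    refine (Complex.abs_re_le_norm _).trans ?_
    rw [norm_neg, norm_div, norm_pow, norm_mul, norm_pow]
    have hden : (1:ℝ) ≤ ‖((n:ℂ)+1)‖ := by
      rw [show ((n:ℂ)+1) = ((n+1:ℕ):ℂ) by push_cast; ring, Complex.norm_natCast]
      exact_mod_cast Nat.one_le_iff_ne_zero.2 (Nat.succ_ne_zero n)
    have key : ‖g θ φ‖^(n+1) / (‖t‖^(n+1) * ‖((n:ℂ)+1)‖) ≤ M^(n+1) / (‖t‖^(n+1) * 1) := by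
      gcongr
      exact hgM θ φ
    rwa [mul_one, ← div_pow] at key
  have hFcont : ∀ n : ℕ, Continuous fun p : ℝ × ℝ => F n p.1 p.2 :=
    fun n => Complex.continuous_re.comp (((hgcont.pow (n+1)).div_const _).neg)
  have hinner : ∀ θ : ℝ, HasSum (fun n => ∫ φ in (0:ℝ)..(2*π), F n θ φ)
      (∫ φ in (0:ℝ)..(2*π), (Real.log ‖t - g θ φ‖ - Real.log ‖t‖)) := by
    intro θ
    apply hasSum_integral_of_dominated_convergence (bound := fun n (_ : ℝ) => r ^ (n+1))
    · intro n
      exact (((hFcont n).comp (Continuous.prodMk_right θ))).aestronglyMeasurable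
    · intro n
      filter_upwards with φ _
      exact hFb n θ φ
    · filter_upwards with φ _
      exact hsum_r
    · exact intervalIntegrable_const
    · filter_upwards with φ _
      exact hptwise θ φ
  have houter : HasSum (fun n => ∫ θ in (0:ℝ)..(2*π), ∫ φ in (0:ℝ)..(2*π), F n θ φ)
      (∫ θ in (0:ℝ)..(2*π), ∫ φ in (0:ℝ)..(2*π),
        (Real.log ‖t - g θ φ‖ - Real.log ‖t‖)) := by
    apply hasSum_integral_of_dominated_convergence
      (bound := fun n (_ : ℝ) => (2*π) * r ^ (n+1))
    · intro n
      exact (continuous_parametric_intervalIntegral_of_continuous'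
        (f := fun θ φ => F n θ φ) (by exact hFcont n) _ _).aestronglyMeasurable
    · intro n
      filter_upwards with θ _
      have := norm_integral_le_of_norm_le_const (C := r ^ (n+1))
        (f := fun φ => F n θ φ) (a := 0) (b := 2*π) (fun φ _ => hFb n θ φ)
      rw [sub_zero, abs_of_pos h2pi] at this
      linarith [this]
    · filter_upwards with θ _
      exact hsum_r.mul_left _
    · exact intervalIntegrable_const
    · filter_upwards with θ _
      exact hinner θ
  have hGcont : ∀ n : ℕ, Continuous fun p : ℝ × ℝ =>
      -((g p.1 p.2) ^ (n + 1) / (t ^ (n + 1) * ((n : ℂ) + 1))) :=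
    fun n => ((hgcont.pow (n+1)).div_const _).neg
  have hterm_val : ∀ n : ℕ, (∫ θ in (0:ℝ)..(2*π), ∫ φ in (0:ℝ)..(2*π), F n θ φ)
      = -((2*π)^2 * (a n).re) := by
    intro n
    have h1 : ∀ θ : ℝ, (∫ φ in (0:ℝ)..(2*π), F n θ φ)
        = (∫ φ in (0:ℝ)..(2*π),
            -((g θ φ) ^ (n + 1) / (t ^ (n + 1) * ((n : ℂ) + 1)))).re := by
      intro θ
      have h := Complex.reCLM.intervalIntegral_comp_comm
        ((show Continuous fun φ : ℝ => -((g θ φ) ^ (n + 1) / (t ^ (n + 1) * ((n : ℂ) + 1))) from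
          (hGcont n).comp (Continuous.prodMk_right θ)).intervalIntegrable
          (μ := MeasureTheory.volume) 0 (2*π))
      simp only [Complex.reCLM_apply] at h
      exact h
    simp_rw [h1]
    have h2' := Complex.reCLM.intervalIntegral_comp_comm
      ((show Continuous fun θ : ℝ => ∫ φ in (0:ℝ)..(2*π),
          -((g θ φ) ^ (n + 1) / (t ^ (n + 1) * ((n : ℂ) + 1))) from
        continuous_parametric_intervalIntegral_of_continuous'
          (f := fun θ φ => -((g θ φ) ^ (n + 1) / (t ^ (n + 1) * ((n : ℂ) + 1))))
          (by exact hGcont n) _ _).intervalIntegrable (μ := MeasureTheory.volume) 0 (2*π))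
    simp only [Complex.reCLM_apply] at h2'
    rw [h2']
    have h2 : (∫ θ in (0:ℝ)..(2*π), ∫ φ in (0:ℝ)..(2*π),
        -((g θ φ) ^ (n + 1) / (t ^ (n + 1) * ((n : ℂ) + 1))))
        = -(((2*π:ℝ):ℂ) ^ 2 * c n / (t ^ (n + 1) * ((n : ℂ) + 1))) := by
      have e1 : ∀ (w : ℂ), -(w / (t ^ (n + 1) * ((n : ℂ) + 1)))
          = w * (-(t ^ (n + 1) * ((n : ℂ) + 1))⁻¹) := fun w => by
        rw [div_eq_mul_inv]; ring
      simp_rw [e1, integral_mul_const]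
      rw [hgint n]
    rw [h2]
    have h3 : ((2*π:ℝ):ℂ) ^ 2 * c n / (t ^ (n + 1) * ((n : ℂ) + 1))
        = ((((2*π)^2 : ℝ)):ℂ) * a n := by
      rw [hadef]
      simp only
      rw [show t ^ (-((n:ℤ)+1)) = (t ^ (n+1))⁻¹ by
        rw [show (-((n:ℤ)+1)) = -(((n+1:ℕ)):ℤ) by push_cast; ring, zpow_neg, zpow_natCast]]
      have htpow : t ^ (n+1) ≠ 0 := pow_ne_zero _ ht0
      have hne1 : ((n:ℂ)+1) ≠ 0 := Nat.cast_add_one_ne_zero n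
      push_cast
      field_simp
    rw [h3]
    rw [Complex.neg_re, Complex.re_ofReal_mul]
  have hsum2 : HasSum (fun n => -((2*π)^2 * (a n).re)) (-((2*π)^2 * (∑' n, a n).re)) :=
    (hre.mul_left ((2*π)^2)).neg
  have hEq : (∫ θ in (0:ℝ)..(2*π), ∫ φ in (0:ℝ)..(2*π),
      (Real.log ‖t - g θ φ‖ - Real.log ‖t‖)) = -((2*π)^2 * (∑' n, a n).re) := by
    refine HasSum.unique ?_ hsum2
    exact (houter.congr_fun fun n => (hterm_val n).symm)
  have htgne : ∀ θ φ : ℝ, ‖t - g θ φ‖ ≠ 0 := by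
    intro θ φ
    rw [norm_ne_zero_iff, sub_ne_zero]
    intro h
    exact (lt_of_le_of_lt (hgM θ φ) ht).ne (congrArg norm h).symm
  have hlogcont : Continuous fun p : ℝ × ℝ => Real.log ‖t - g p.1 p.2‖ :=
    (continuous_const.sub hgcont).norm.log (fun p => htgne p.1 p.2)
  have hsplit : ∀ θ : ℝ, (∫ φ in (0:ℝ)..(2*π), (Real.log ‖t - g θ φ‖ - Real.log ‖t‖))
      = (∫ φ in (0:ℝ)..(2*π), Real.log ‖t - g θ φ‖) - (2*π) * Real.log ‖t‖ := by
    intro θ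
    have hgθ : Continuous fun φ : ℝ => g θ φ := hgcont.comp (Continuous.prodMk_right θ)
    have hcθ : Continuous fun φ : ℝ => Real.log ‖t - g θ φ‖ :=
      (continuous_const.sub hgθ).norm.log (fun φ => htgne θ φ)
    rw [integral_sub (hcθ.intervalIntegrable _ _) intervalIntegrable_const, integral_const]
    simp [smul_eq_mul]
  have hsplit2 : (∫ θ in (0:ℝ)..(2*π), ∫ φ in (0:ℝ)..(2*π),
      (Real.log ‖t - g θ φ‖ - Real.log ‖t‖))
      = (∫ θ in (0:ℝ)..(2*π), ∫ φ in (0:ℝ)..(2*π), Real.log ‖t - g θ φ‖)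
        - (2*π)^2 * Real.log ‖t‖ := by
    simp_rw [hsplit]
    rw [integral_sub ((show Continuous fun θ : ℝ =>
        ∫ φ in (0:ℝ)..(2*π), Real.log ‖t - g θ φ‖ from
      continuous_parametric_intervalIntegral_of_continuous'
        (f := fun θ φ => Real.log ‖t - g θ φ‖) (by exact hlogcont) _ _
      ).intervalIntegrable (μ := MeasureTheory.volume) 0 (2*π))
      intervalIntegrable_const, integral_const]
    simp [smul_eq_mul, sq]
    ring
  rw [hsplit2] at hEq
  have hpi2 : ((2*π)^2 : ℝ) ≠ 0 := by positivity
  have hfinal : (∫ θ in (0:ℝ)..(2*π), ∫ φ in (0:ℝ)..(2*π), Real.log ‖t - g θ φ‖)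
      = (2*π)^2 * Real.log ‖t‖ - (2*π)^2 * (∑' n, a n).re := by linarith [hEq]
  rw [hfinal]
  field_simp

end MahlerAux

/-- For a two-variable complex Laurent polynomial `P` and `t ∈ ℂ` with
`|t| > M = max_{|x|=|y|=1} |P(x,y)|`, the logarithmic Mahler measure of `t - P` equals
`log|t| - Re Σ_{n≥1} c_n t^{-n}/n`, an absolutely convergent series, where `c_n` is the
constant term of `P^n`. -/
theorem stmt0 (P : AddMonoidAlgebra ℂ (ℤ × ℤ)) (t : ℂ)
    (ht : sSup {r : ℝ | ∃ x y : ℂ, ‖x‖ = 1 ∧ ‖y‖ = 1 ∧ r = ‖lpEval P x y‖} < ‖t‖) :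
    Summable (fun n : ℕ =>
      ‖(P ^ (n + 1)).coeff (0 : ℤ × ℤ) * t ^ (-((n : ℤ) + 1)) / ((n : ℂ) + 1)‖) ∧
    (1 / (2 * Real.pi) ^ 2) *
        ∫ θ in (0:ℝ)..(2 * Real.pi), ∫ φ in (0:ℝ)..(2 * Real.pi),
          Real.log ‖t - lpEval P (Complex.exp (θ * Complex.I)) (Complex.exp (φ * Complex.I))‖
      = Real.log ‖t‖
        - (∑' n : ℕ, (P ^ (n + 1)).coeff (0 : ℤ × ℤ) * t ^ (-((n : ℤ) + 1)) / ((n : ℂ) + 1)).re := by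
  have hbdd : BddAbove {r : ℝ | ∃ x y : ℂ, ‖x‖ = 1 ∧ ‖y‖ = 1 ∧ r = ‖lpEval P x y‖} := by
    refine ⟨∑ m ∈ P.coeff.support, ‖P.coeff m‖, ?_⟩
    rintro r ⟨x, y, hx, hy, rfl⟩
    calc ‖lpEval P x y‖ ≤ ∑ m ∈ P.coeff.support, ‖P.coeff m * x ^ m.1 * y ^ m.2‖ := norm_sum_le _ _
    _ = ∑ m ∈ P.coeff.support, ‖P.coeff m‖ := Finset.sum_congr rfl fun m _ => by
        rw [norm_mul, norm_mul, norm_zpow, norm_zpow, hx, hy, one_zpow, one_zpow,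
          mul_one, mul_one]
  have hexp1 : ∀ θ : ℝ, ‖Complex.exp (θ * Complex.I)‖ = 1 := fun θ => by
    rw [Complex.norm_exp_ofReal_mul_I]
  have hgM : ∀ θ φ : ℝ, ‖lpEval P (Complex.exp (θ * Complex.I)) (Complex.exp (φ * Complex.I))‖
      ≤ sSup {r : ℝ | ∃ x y : ℂ, ‖x‖ = 1 ∧ ‖y‖ = 1 ∧ r = ‖lpEval P x y‖} :=
    fun θ φ => le_csSup hbdd ⟨_, _, hexp1 θ, hexp1 φ, rfl⟩
  have hM0 : (0:ℝ) ≤ sSup {r : ℝ | ∃ x y : ℂ, ‖x‖ = 1 ∧ ‖y‖ = 1 ∧ r = ‖lpEval P x y‖} :=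
    le_trans (norm_nonneg _) (hgM 0 0)
  have hgcont : Continuous fun p : ℝ × ℝ =>
      lpEval P (Complex.exp (p.1 * Complex.I)) (Complex.exp (p.2 * Complex.I)) := by
    unfold lpEval
    exact continuous_finset_sum _ fun m _ =>
      (continuous_const.mul ((cont_zexp m.1).comp continuous_fst)).mul
        ((cont_zexp m.2).comp continuous_snd)
  have hgint : ∀ n : ℕ, (∫ θ in (0:ℝ)..(2*Real.pi), ∫ φ in (0:ℝ)..(2*Real.pi),
      (lpEval P (Complex.exp (θ * Complex.I)) (Complex.exp (φ * Complex.I))) ^ (n+1))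
      = ((2*Real.pi:ℝ):ℂ) ^ 2 * (P ^ (n+1)).coeff (0 : ℤ × ℤ) := by
    intro n
    have hp : ∀ θ φ : ℝ, lpEval (P ^ (n+1)) (Complex.exp (θ * Complex.I))
        (Complex.exp (φ * Complex.I))
        = (lpEval P (Complex.exp (θ * Complex.I)) (Complex.exp (φ * Complex.I))) ^ (n+1) :=
      fun θ φ => lpEval_pow P (Complex.exp_ne_zero _) (Complex.exp_ne_zero _) (n+1)
    have h := integral_lpEval (P ^ (n+1))
    simp_rw [hp] at h
    exact h
  exact mahler_aux
    (fun θ φ => lpEval P (Complex.exp (θ * Complex.I)) (Complex.exp (φ * Complex.I)))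
    t (fun n => (P ^ (n+1)).coeff (0 : ℤ × ℤ)) _ hgM hM0 ht hgcont hgint
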